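/- Every undirected graph G on n vertices and m edges has a vertex cover of size at most (n+m)/3. -/

import Mathlib

open scoped Classical

private lemma vc_aux {V : Type*} [Fintype V] (G : SimpleGraph V) :
    ∃ C : Set V, (∀ u v, G.Adj u v → u ∈ C ∨ v ∈ C) ∧
      3 * C.ncard ≤ G.support.ncard + G.edgeSet.ncard := by
  suffices key : ∀ (m : ℕ) (G : SimpleGraph V), G.edgeSet.ncard = m →
      ∃ C : Set V, (∀ u v, G.Adj u v → u ∈ C ∨ v ∈ C) ∧
        3 * C.ncard ≤ G.support.ncard + G.edgeSet.ncard from key _ G rfl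
  intro m
  induction m using Nat.strong_induction_on with
  | _ m IH =>
  intro G hm
  by_cases hv : ∃ v : V, 2 ≤ (G.neighborSet v).ncard
  · obtain ⟨v, hv⟩ := hv
    set G' := G.deleteEdges (G.incidenceSet v) with hG'
    have hinc : (G.incidenceSet v).ncard = (G.neighborSet v).ncard := by
      rw [← Nat.card_coe_set_eq, ← Nat.card_coe_set_eq]
      exact Nat.card_congr (G.incidenceSetEquivNeighborSet v)
    have hsub : G.incidenceSet v ⊆ G.edgeSet := G.incidenceSet_subset v
    have hEfin : G.edgeSet.Finite := G.edgeSet.toFinite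
    have hE' : G'.edgeSet = G.edgeSet \ G.incidenceSet v :=
      SimpleGraph.edgeSet_deleteEdges _
    have hm' : G'.edgeSet.ncard = m - (G.incidenceSet v).ncard := by
      rw [hE', Set.ncard_diff hsub, hm]
    have hle : (G.incidenceSet v).ncard ≤ m := by
      rw [← hm]; exact Set.ncard_le_ncard hsub hEfin
    have h2 : 2 ≤ (G.incidenceSet v).ncard := hinc ▸ hv
    have hmlt : G'.edgeSet.ncard < m := by omega
    obtain ⟨C', hC'cov, hC'⟩ := IH _ hmlt G' rfl
    -- v is not in support of G'
    have hvns : v ∉ G'.support := by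
      rintro ⟨w, hw⟩
      replace hw : G'.Adj v w := hw
      rw [hG', SimpleGraph.deleteEdges_adj] at hw
      exact hw.2 ((G.mem_incidenceSet v w).2 hw.1)
    have hsupsub : insert v G'.support ⊆ G.support := by
      rintro u (rfl | hu)
      · obtain ⟨w, hw⟩ := Set.nonempty_of_ncard_ne_zero
          (by omega : (G.neighborSet u).ncard ≠ 0)
        exact ⟨w, hw⟩
      · obtain ⟨w, hw⟩ := hu
        exact ⟨w, (SimpleGraph.deleteEdges_adj.mp hw).1⟩
    have hsup : G'.support.ncard + 1 ≤ G.support.ncard := by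
      have := Set.ncard_le_ncard hsupsub G.support.toFinite
      rwa [Set.ncard_insert_of_notMem hvns G'.support.toFinite] at this
    refine ⟨insert v C', ?_, ?_⟩
    · intro a b hab
      by_cases hva : v = a
      · exact Or.inl (Or.inl hva.symm)
      by_cases hvb : v = b
      · exact Or.inr (Or.inl hvb.symm)
      · have : G'.Adj a b := by
          rw [hG', SimpleGraph.deleteEdges_adj]
          refine ⟨hab, fun h => ?_⟩
          rcases Sym2.mem_iff.mp h.2 with rfl | rfl
          · exact hva rfl
          · exact hvb rfl
        rcases hC'cov a b this with h | h
        · exact Or.inl (Or.inr h)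
        · exact Or.inr (Or.inr h)
    · have hins : (insert v C').ncard ≤ C'.ncard + 1 :=
        Set.ncard_insert_le v C'
      rw [hm]
      omega
  · push_neg at hv
    refine ⟨(fun e : Sym2 V => (Quot.out e).1) '' G.edgeSet, ?_, ?_⟩
    · intro a b hab
      have hmem : s(a, b) ∈ G.edgeSet := hab
      have : (Quot.out s(a, b)).1 ∈ s(a, b) := Sym2.out_fst_mem _
      rcases Sym2.mem_iff.mp this with h | h
      · exact Or.inl (h ▸ ⟨s(a, b), hmem, rfl⟩)
      · exact Or.inr (h ▸ ⟨s(a, b), hmem, rfl⟩)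
    · have hCle : ((fun e : Sym2 V => (Quot.out e).1) '' G.edgeSet).ncard ≤ m := by
        rw [← hm]; exact Set.ncard_image_le G.edgeSet.toFinite
      -- handshake: 2 * m ≤ support.ncard
      have hdeg : ∀ w : V, G.degree w = (G.neighborSet w).ncard := fun w => by
        rw [← SimpleGraph.card_neighborSet_eq_degree, ← Nat.card_coe_set_eq,
          Nat.card_eq_fintype_card]
      have hsum : ∑ w : V, G.degree w = 2 * m := by
        rw [SimpleGraph.sum_degrees_eq_twice_card_edges, ← hm]
        congr 1
        simp [Set.ncard_eq_toFinset_card']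
        congr 1; ext e; simp
      have hsum2 : ∑ w : V, G.degree w ≤ G.support.ncard := by
        rw [Set.ncard_eq_toFinset_card' G.support]
        calc ∑ w : V, G.degree w = ∑ w ∈ G.support.toFinset, G.degree w := by
              refine (Finset.sum_subset (Finset.subset_univ _) ?_).symm
              intro x _ hx
              by_contra h
              have : 0 < G.degree x := Nat.pos_of_ne_zero h
              obtain ⟨y, hy⟩ := Finset.card_pos.mp this
              exact hx (Set.mem_toFinset.mpr ⟨y, (SimpleGraph.mem_neighborFinset _ _ _).mp hy⟩)
          _ ≤ ∑ _w ∈ G.support.toFinset, 1 := by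
              refine Finset.sum_le_sum fun i _ => ?_
              rw [hdeg]; exact Nat.lt_succ_iff.mp (hv i)
          _ = G.support.toFinset.card := by simp
      rw [hm]
      omega

/-- Every undirected graph on `n` vertices and `m` edges has a
vertex cover of size at most `(n + m) / 3`. -/
theorem vertex_cover_third {V : Type*} [Fintype V] (G : SimpleGraph V) :
    ∃ C : Set V, (∀ u v, G.Adj u v → u ∈ C ∨ v ∈ C) ∧
      (C.ncard : ℝ) ≤ ((Fintype.card V : ℝ) + (G.edgeSet.ncard : ℝ)) / 3 := by
  obtain ⟨C, hcov, hC⟩ := vc_aux G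
  refine ⟨C, hcov, ?_⟩
  have hsup : G.support.ncard ≤ Fintype.card V := by
    have := Set.ncard_le_ncard (Set.subset_univ G.support) Set.finite_univ
    simpa [Set.ncard_univ, Nat.card_eq_fintype_card] using this
  have : 3 * C.ncard ≤ Fintype.card V + G.edgeSet.ncard := by omega
  rw [le_div_iff₀ (by norm_num : (0:ℝ) < 3)]
  calc (C.ncard : ℝ) * 3 = ((3 * C.ncard : ℕ) : ℝ) := by push_cast; ring
    _ ≤ _ := by exact_mod_cast this
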